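/- arXiv:1603.01059 — 4 statements merged into one kernel-verified Lean document; each statement's English description precedes it below -/
import Mathlib

section
/- For real s > 0 define G(s) = ∫₀^∞ (t+1)^{−3/2} e^{−s t} dt. Then (G(s) − 2)/√s tends to −2√π as s tends to 0 from the right; that is, G(s) has the asymptotic expansion G(s) ∼ 2 − 2√(π s) as s → 0⁺. -/
open MeasureTheory Real Set Filter
lemma intOn_aux {s p : ℝ} (hs : 0 < s) (hp : p ≤ 0) :
    IntegrableOn (fun t : ℝ => (t + 1) ^ p * Real.exp (-s * t)) (Ioi 0) := by
  apply Integrable.mono (exp_neg_integrableOn_Ioi 0 hs)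
  · exact (((measurable_id.add_const 1).pow_const p).mul
      ((measurable_id.const_mul (-s)).exp)).aestronglyMeasurable
  · filter_upwards [ae_restrict_mem measurableSet_Ioi] with t ht
    have h1 : (0:ℝ) < t + 1 := by simp at ht; linarith
    have h2 : (t + 1 : ℝ) ^ p ≤ 1 :=
      Real.rpow_le_one_of_one_le_of_nonpos (by linarith [ht.out]) hp
    have h3 : (0:ℝ) ≤ (t + 1 : ℝ) ^ p := (Real.rpow_pos_of_pos h1 p).le
    rw [Real.norm_eq_abs, Real.norm_eq_abs, abs_of_nonneg (by positivity),
      abs_of_nonneg (Real.exp_pos _).le]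
    calc (t+1) ^ p * Real.exp (-s * t) ≤ 1 * Real.exp (-s * t) := by
          apply mul_le_mul_of_nonneg_right h2 (Real.exp_pos _).le
      _ = Real.exp (-s * t) := one_mul _

lemma ibp_aux {s : ℝ} (hs : 0 < s) :
    (∫ t in Ioi (0:ℝ), (t + 1) ^ (-(3/2:ℝ)) * Real.exp (-s * t))
      = 2 - 2 * s * ∫ t in Ioi (0:ℝ), (t + 1) ^ (-(1/2:ℝ)) * Real.exp (-s * t) := by
  set f : ℝ → ℝ := fun t => -2 * (t + 1) ^ (-(1/2:ℝ)) * Real.exp (-s * t) with hf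
  have hderiv : ∀ t ∈ Ioi (0:ℝ), HasDerivAt f
      ((t + 1) ^ (-(3/2:ℝ)) * Real.exp (-s * t)
        + 2 * s * ((t + 1) ^ (-(1/2:ℝ)) * Real.exp (-s * t))) t := by
    intro t ht
    have h1 : (0:ℝ) < t + 1 := by simp at ht; linarith
    have hpow : HasDerivAt (fun t : ℝ => (t + 1) ^ (-(1/2:ℝ)))
        (1 * (-(1/2:ℝ)) * (t + 1) ^ (-(1/2:ℝ) - 1)) t :=
      ((hasDerivAt_id t).add_const 1).rpow_const (Or.inl h1.ne')
    have hexp : HasDerivAt (fun t : ℝ => Real.exp (-s * t)) (Real.exp (-s * t) * (-s)) t := by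
      simpa [mul_comm] using ((hasDerivAt_id t).const_mul (-s)).exp
    have := ((hpow.const_mul (-2)).mul hexp)
    refine HasDerivAt.congr_deriv this ?_
    rw [show (-(1/2:ℝ) - 1) = -(3/2:ℝ) by norm_num]
    ring
  have hcont : ContinuousWithinAt f (Ici 0) 0 := by
    apply ContinuousAt.continuousWithinAt
    have h1 : ContinuousAt (fun t : ℝ => (t + 1) ^ (-(1/2:ℝ))) 0 := by
      apply ContinuousAt.rpow_const
      · exact (continuous_id.add continuous_const).continuousAt
      · left; norm_num
    exact ((h1.const_mul (-2)).mul ((continuous_const.mul continuous_id).rexp).continuousAt)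
  have hint : IntegrableOn (fun t : ℝ => (t + 1) ^ (-(3/2:ℝ)) * Real.exp (-s * t)
      + 2 * s * ((t + 1) ^ (-(1/2:ℝ)) * Real.exp (-s * t))) (Ioi 0) :=
    (intOn_aux hs (by norm_num)).add ((intOn_aux hs (by norm_num)).const_mul (2 * s))
  have hlim : Tendsto f atTop (nhds 0) := by
    apply squeeze_zero_norm' (a := fun t : ℝ => 2 * Real.exp (-s * t)) (f := f)
    · filter_upwards [eventually_ge_atTop (0:ℝ)] with t ht
      have h1 : (0:ℝ) < t + 1 := by linarith
      have h2 : (t + 1 : ℝ) ^ (-(1/2:ℝ)) ≤ 1 :=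
        Real.rpow_le_one_of_one_le_of_nonpos (by linarith) (by norm_num)
      have h3 : (0:ℝ) ≤ (t + 1 : ℝ) ^ (-(1/2:ℝ)) := (Real.rpow_pos_of_pos h1 _).le
      rw [hf]
      simp only [Real.norm_eq_abs, abs_mul, abs_of_nonneg h3, abs_of_nonneg (Real.exp_pos _).le]
      have : |(-2:ℝ)| = 2 := by norm_num
      rw [this]
      nlinarith [Real.exp_pos (-s * t)]
    · have : Tendsto (fun t : ℝ => -s * t) atTop atBot :=
        (tendsto_const_mul_atBot_of_neg (by linarith : -s < 0)).mpr tendsto_id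
      simpa using (Real.tendsto_exp_atBot.comp this).const_mul 2
  have key := integral_Ioi_of_hasDerivAt_of_tendsto hcont hderiv hint hlim
  have hf0 : f 0 = -2 := by simp [hf]
  rw [hf0] at key
  rw [integral_add (intOn_aux hs (by norm_num))
    ((intOn_aux hs (by norm_num)).const_mul (2 * s)), MeasureTheory.integral_const_mul] at key
  linarith [key]

lemma subst_aux {s : ℝ} (hs : 0 < s) :
    Real.sqrt s * ∫ t in Ioi (0:ℝ), (t + 1) ^ (-(1/2:ℝ)) * Real.exp (-s * t)
      = ∫ u in Ioi (0:ℝ), (u + s) ^ (-(1/2:ℝ)) * Real.exp (-u) := by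
  have key := integral_comp_mul_left_Ioi
    (g := fun u : ℝ => (u + s) ^ (-(1/2:ℝ)) * Real.exp (-u)) 0 hs
  rw [mul_zero] at key
  have h1 : ∀ x ∈ Ioi (0:ℝ), (s * x + s) ^ (-(1/2:ℝ)) * Real.exp (-(s * x))
      = s ^ (-(1/2:ℝ)) * ((x + 1) ^ (-(1/2:ℝ)) * Real.exp (-s * x)) := by
    intro x hx
    have hx0 : (0:ℝ) < x := hx
    have : s * x + s = s * (x + 1) := by ring
    rw [this, Real.mul_rpow hs.le (by linarith)]
    ring_nf
  rw [setIntegral_congr_fun measurableSet_Ioi h1, MeasureTheory.integral_const_mul] at key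
  have key' : s * (s ^ (-(1/2:ℝ)) *
        ∫ x in Ioi (0:ℝ), (x + 1) ^ (-(1/2:ℝ)) * Real.exp (-s * x))
      = ∫ u in Ioi (0:ℝ), (u + s) ^ (-(1/2:ℝ)) * Real.exp (-u) := by
    rw [key, smul_eq_mul, ← mul_assoc, mul_inv_cancel₀ hs.ne', one_mul]
  rw [← key', ← mul_assoc]
  congr 1
  rw [Real.sqrt_eq_rpow,
    show (s:ℝ) * s ^ (-(1/2:ℝ)) = s ^ (1:ℝ) * s ^ (-(1/2:ℝ)) by rw [Real.rpow_one],
    ← Real.rpow_add hs]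
  norm_num

lemma dct_aux :
    Tendsto (fun s : ℝ => ∫ u in Ioi (0:ℝ), (u + s) ^ (-(1/2:ℝ)) * Real.exp (-u))
      (nhdsWithin 0 (Ioi 0)) (nhds (Real.sqrt π)) := by
  have hlimval : (∫ u in Ioi (0:ℝ), u ^ (-(1/2:ℝ)) * Real.exp (-u)) = Real.sqrt π := by
    rw [← Real.Gamma_one_half_eq, Real.Gamma_eq_integral (by norm_num : (0:ℝ) < 1/2)]
    apply setIntegral_congr_fun measurableSet_Ioi
    intro u hu
    rw [show (1/2 - 1 : ℝ) = -(1/2:ℝ) by norm_num]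
    ring
  rw [← hlimval]
  apply tendsto_integral_filter_of_dominated_convergence
    (bound := fun u : ℝ => u ^ (-(1/2:ℝ)) * Real.exp (-u))
  · filter_upwards with s
    exact (((measurable_id.add_const s).pow_const _).mul
      (measurable_id.neg.exp)).aestronglyMeasurable
  · filter_upwards [self_mem_nhdsWithin] with s hs
    filter_upwards [ae_restrict_mem measurableSet_Ioi] with u hu
    have hu0 : (0:ℝ) < u := hu
    have hs0 : (0:ℝ) < s := hs
    have h1 : (u + s) ^ (-(1/2:ℝ)) ≤ u ^ (-(1/2:ℝ)) :=
      Real.rpow_le_rpow_of_nonpos hu0 (by linarith) (by norm_num)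
    rw [Real.norm_eq_abs, abs_of_nonneg (by positivity)]
    exact mul_le_mul_of_nonneg_right h1 (Real.exp_pos _).le
  · have := Real.GammaIntegral_convergent (by norm_num : (0:ℝ) < 1/2)
    apply this.congr_fun _ measurableSet_Ioi
    intro u hu
    rw [show (1/2 - 1 : ℝ) = -(1/2:ℝ) by norm_num]
    ring
  · filter_upwards [ae_restrict_mem measurableSet_Ioi] with u hu
    have hu0 : (0:ℝ) < u := hu
    have hc : ContinuousAt (fun s : ℝ => (u + s) ^ (-(1/2:ℝ)) * Real.exp (-u)) 0 := by
      apply ContinuousAt.mul _ continuousAt_const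
      apply ContinuousAt.rpow_const (continuousAt_const.add continuousAt_id)
      left; simpa using hu0.ne'
    have := hc.tendsto.mono_left (nhdsWithin_le_nhds (s := Ioi (0:ℝ)))
    simpa using this

/-- For real `s > 0` let `G(s) = ∫₀^∞ (t+1)^{-3/2} e^{-s t} dt`. Then
`(G(s) - 2)/√s → -2√π` as `s → 0⁺`, i.e. `G(s) ∼ 2 - 2√(π s)` as `s → 0⁺`. -/
theorem laplace_asymptotics_at_zero :
    Filter.Tendsto
      (fun s : ℝ =>
        ((∫ t in Set.Ioi (0:ℝ), (t + 1) ^ (-(3/2 : ℝ)) * Real.exp (-s * t)) - 2)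
          / Real.sqrt s)
      (nhdsWithin 0 (Set.Ioi 0)) (nhds (-2 * Real.sqrt π)) := by
  apply Tendsto.congr' _ (dct_aux.const_mul (-2))
  filter_upwards [self_mem_nhdsWithin] with s hs
  have hs0 : (0:ℝ) < s := hs
  rw [ibp_aux hs0, ← subst_aux hs0]
  rw [eq_div_iff (Real.sqrt_pos.mpr hs0).ne']
  have hss : Real.sqrt s * Real.sqrt s = s := Real.mul_self_sqrt hs0.le
  rw [show -2 * (Real.sqrt s * ∫ t in Ioi (0:ℝ), (t + 1) ^ (-(1/2:ℝ)) * Real.exp (-s * t))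
      * Real.sqrt s
    = -2 * ((Real.sqrt s * Real.sqrt s)
      * ∫ t in Ioi (0:ℝ), (t + 1) ^ (-(1/2:ℝ)) * Real.exp (-s * t)) by ring, hss]
  ring
end

section
/- Let α ≥ 0 and let f_o : [0,∞) → ℂ be measurable with ‖f_o‖_{1,α} = ∫₀^∞ |f_o(t)| e^{−α t} dt < 1. Then there exists a measurable function f_cl ∈ L_{1,α} (the closed-loop impulse response) satisfying f_cl(t) + (f_o ∗ f_cl)(t) = f_o(t) for almost every t ≥ 0, and ‖f_cl‖_{1,α} ≤ ‖f_o‖_{1,α} / (1 − ‖f_o‖_{1,α}). -/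
open MeasureTheory Real Set Complex Filter
open scoped Convolution ENNReal NNReal

open MeasureTheory Real Set Complex Filter
open scoped Convolution ENNReal NNReal

noncomputable def mulCC : ℂ →L[ℝ] ℂ →L[ℝ] ℂ := ContinuousLinearMap.mul ℝ ℂ

@[simp] lemma mulCC_apply (a b : ℂ) : mulCC a b = a * b := rfl

lemma conv_norm_le {f g : ℝ → ℂ} (hf : Integrable f) (hg : Integrable g) :
    ∫ x, ‖(f ⋆[mulCC] g) x‖ ≤ (∫ x, ‖f x‖) * (∫ x, ‖g x‖) := by
  have h1 : Integrable ((fun x => ‖f x‖) ⋆[ContinuousLinearMap.mul ℝ ℝ] (fun x => ‖g x‖)) :=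
    hf.norm.integrable_convolution _ hg.norm
  have h2 : Integrable (f ⋆[mulCC] g) := hf.integrable_convolution _ hg
  calc ∫ x, ‖(f ⋆[mulCC] g) x‖
      ≤ ∫ x, ((fun x => ‖f x‖) ⋆[ContinuousLinearMap.mul ℝ ℝ] (fun x => ‖g x‖)) x := by
        refine integral_mono h2.norm h1 fun x => ?_
        have := norm_integral_le_integral_norm (μ := volume) (fun t => f t * g (x - t))
        simp only [convolution_def, mulCC_apply, ContinuousLinearMap.mul_apply', norm_mul] at *
        exact this
    _ = (∫ x, ‖f x‖) * (∫ x, ‖g x‖) := by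
        rw [integral_convolution _ hf.norm hg.norm]; simp

lemma neumann {u : ℝ → ℂ} (hm : Measurable u) (hi : Integrable u)
    (hsupp : ∀ t ≤ 0, u t = 0) (hr1 : (∫ x, ‖u x‖) < 1) :
    ∃ v : ℝ → ℂ, Measurable v ∧ (∀ t ≤ 0, v t = 0) ∧ Integrable v ∧
      (∀ᵐ t, v t + (u ⋆[mulCC] v) t = u t) ∧
      (∫ x, ‖v x‖) ≤ (∫ x, ‖u x‖) / (1 - ∫ x, ‖u x‖) := by
  set r : ℝ := ∫ x, ‖u x‖ with hr
  have hr0 : 0 ≤ r := integral_nonneg fun x => norm_nonneg _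
  -- iterated convolutions
  set P : ℕ → ℝ → ℂ := fun n => (fun w => u ⋆[mulCC] w)^[n] u with hP
  have hP0 : P 0 = u := rfl
  have hPs : ∀ n, P (n + 1) = u ⋆[mulCC] P n := by
    intro n; simp only [hP, Function.iterate_succ_apply']
  have hPint : ∀ n, Integrable (P n) := by
    intro n; induction n with
    | zero => exact hi
    | succ n ih => rw [hPs]; exact hi.integrable_convolution _ ih
  have hPnorm : ∀ n, (∫ x, ‖P n x‖) ≤ r ^ (n + 1) := by
    intro n; induction n with
    | zero => simp only [hP0, pow_one]; exact le_of_eq (by rw [hr, pow_one])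
    | succ n ih =>
        rw [hPs]
        calc ∫ x, ‖(u ⋆[mulCC] P n) x‖ ≤ r * ∫ x, ‖P n x‖ := conv_norm_le hi (hPint n)
          _ ≤ r * r ^ (n + 1) := by
              exact mul_le_mul_of_nonneg_left ih hr0
          _ = r ^ (n + 2) := by ring
  have hPsupp : ∀ n, ∀ t ≤ 0, P n t = 0 := by
    intro n; induction n with
    | zero => exact hsupp
    | succ n ih =>
        intro t ht
        rw [hPs]
        rw [convolution_def]
        have : (fun s => mulCC (u s) (P n (t - s))) = fun _ => (0 : ℂ) := by
          funext s
          rcases le_or_gt s 0 with hs | hs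
          · simp [hsupp s hs]
          · have : t - s ≤ 0 := by linarith
            simp [ih _ this]
        rw [this, integral_zero]
  -- strongly measurable representatives
  have hQex : ∀ n, ∃ Q : ℝ → ℂ, StronglyMeasurable Q ∧ Q =ᵐ[volume] P n := fun n =>
    ⟨(hPint n).aestronglyMeasurable.mk _, (hPint n).aestronglyMeasurable.stronglyMeasurable_mk,
      (hPint n).aestronglyMeasurable.ae_eq_mk.symm⟩
  choose Q hQsm hQe using hQex
  have hQint : ∀ n, Integrable (Q n) := fun n => (hPint n).congr (hQe n).symm
  have hQnorm : ∀ n, (∫ x, ‖Q n x‖) ≤ r ^ (n + 1) := by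
    intro n
    rw [show (∫ x, ‖Q n x‖) = ∫ x, ‖P n x‖ from
      integral_congr_ae ((hQe n).mono fun x hx => by simp only []; rw [hx])]
    exact hPnorm n
  -- lintegral bounds
  set I : ℕ → ℝ≥0∞ := fun n => ∫⁻ x, (‖Q n x‖₊ : ℝ≥0∞) with hI
  have hIle : ∀ n, I n ≤ ENNReal.ofReal (r ^ (n + 1)) := by
    intro n
    show (∫⁻ x, (‖Q n x‖₊ : ℝ≥0∞)) ≤ ENNReal.ofReal (r ^ (n + 1))
    rw [show (∫⁻ x, (‖Q n x‖₊ : ℝ≥0∞)) = ∫⁻ x, ‖Q n x‖ₑ from rfl, ← ofReal_integral_norm_eq_lintegral_enorm (hQint n)]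
    exact ENNReal.ofReal_le_ofReal (hQnorm n)
  have hgeom : (∑' n : ℕ, ENNReal.ofReal (r ^ (n + 1))) = ENNReal.ofReal (r / (1 - r)) := by
    have h1r : 0 < 1 - r := by linarith
    have hsummable : Summable fun n : ℕ => r ^ (n + 1) :=
      ((summable_geometric_of_lt_one hr0 hr1)).comp_injective (add_left_injective 1)
    rw [← ENNReal.ofReal_tsum_of_nonneg (fun n => pow_nonneg hr0 _) hsummable]
    congr 1
    have : ∑' n : ℕ, r ^ (n + 1) = r * ∑' n : ℕ, r ^ n := by
      rw [← tsum_mul_left]; congr 1; funext n; ring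
    rw [this, tsum_geometric_of_lt_one hr0 hr1]
    rw [div_eq_mul_inv]
  have hImain : (∑' n, I n) ≤ ENNReal.ofReal (r / (1 - r)) := by
    rw [← hgeom]; exact ENNReal.tsum_le_tsum hIle
  have hIfin : (∑' n, I n) ≠ ∞ := by
    exact ne_top_of_le_ne_top ENNReal.ofReal_ne_top hImain
  -- definition of v
  set v : ℝ → ℂ := fun t => ∑' n, (-1 : ℂ) ^ n * Q n t with hv
  have hnormeq : ∀ n t, ‖(-1 : ℂ) ^ n * Q n t‖ = ‖Q n t‖ := by
    intro n t; simp [norm_mul, norm_pow]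
  -- a.e. summability
  have hsum_ae : ∀ᵐ t, Summable fun n => ‖Q n t‖ := by
    have hmeas : ∀ n, Measurable fun t => (‖Q n t‖₊ : ℝ≥0∞) :=
      fun n => (hQsm n).measurable.nnnorm.coe_nnreal_ennreal
    have h1 : (∫⁻ t, ∑' n, (‖Q n t‖₊ : ℝ≥0∞)) = ∑' n, I n := by
      rw [lintegral_tsum fun n => (hmeas n).aemeasurable]
    have h2 : ∀ᵐ t, (∑' n, (‖Q n t‖₊ : ℝ≥0∞)) < ∞ := by
      refine ae_lt_top (by measurability) ?_
      rw [h1]; exact hIfin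
    filter_upwards [h2] with t ht
    have := ENNReal.tsum_coe_ne_top_iff_summable.mp ht.ne
    simpa [← NNReal.summable_coe, coe_nnnorm] using this
  have hsumv : ∀ᵐ t, Summable fun n => (-1 : ℂ) ^ n * Q n t := by
    filter_upwards [hsum_ae] with t ht
    refine Summable.of_norm ?_
    simpa [hnormeq] using ht
  -- measurability of v
  have hvaesm : AEStronglyMeasurable v volume := by
    refine aestronglyMeasurable_of_tendsto_ae atTop
      (f := fun N t => ∑ n ∈ Finset.range N, (-1 : ℂ) ^ n * Q n t) (fun N => ?_) ?_
    · exact (Finset.aestronglyMeasurable_fun_sum _ fun n _ =>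
        ((hQsm n).measurable.const_mul _).aestronglyMeasurable)
    · filter_upwards [hsumv] with t ht
      exact ht.hasSum.tendsto_sum_nat
  -- bound on ‖v‖ pointwise a.e.
  have hvbound : ∀ᵐ t, (‖v t‖₊ : ℝ≥0∞) ≤ ∑' n, (‖Q n t‖₊ : ℝ≥0∞) := by
    filter_upwards [hsum_ae] with t ht
    have h1 : ‖v t‖ ≤ ∑' n, ‖Q n t‖ := by
      rw [hv]
      refine le_trans (norm_tsum_le_tsum_norm (by simpa [hnormeq] using ht)) ?_
      exact le_of_eq (by congr 1; funext n; exact hnormeq n t)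
    calc (‖v t‖₊ : ℝ≥0∞) = ENNReal.ofReal ‖v t‖ := (ofReal_norm _).symm
      _ ≤ ENNReal.ofReal (∑' n, ‖Q n t‖) := ENNReal.ofReal_le_ofReal h1
      _ = ∑' n, (‖Q n t‖₊ : ℝ≥0∞) := by
          rw [ENNReal.ofReal_tsum_of_nonneg (fun n => norm_nonneg _) ht]
          congr 1; funext n; exact ofReal_norm _
  have hvlint : (∫⁻ t, (‖v t‖₊ : ℝ≥0∞)) ≤ ENNReal.ofReal (r / (1 - r)) := by
    calc (∫⁻ t, (‖v t‖₊ : ℝ≥0∞)) ≤ ∫⁻ t, ∑' n, (‖Q n t‖₊ : ℝ≥0∞) := lintegral_mono_ae hvbound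
      _ = ∑' n, I n := by
          rw [lintegral_tsum fun n =>
            ((hQsm n).measurable.nnnorm.coe_nnreal_ennreal).aemeasurable]
      _ ≤ ENNReal.ofReal (r / (1 - r)) := hImain
  have hvint : Integrable v := by
    refine ⟨hvaesm, ?_⟩
    exact lt_of_le_of_lt hvlint ENNReal.ofReal_lt_top
  have hvnorm : (∫ x, ‖v x‖) ≤ r / (1 - r) := by
    have h1r : 0 < 1 - r := by linarith
    rw [integral_norm_eq_lintegral_enorm hvaesm]
    calc (∫⁻ t, (‖v t‖₊ : ℝ≥0∞)).toReal ≤ (ENNReal.ofReal (r / (1 - r))).toReal :=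
          ENNReal.toReal_mono ENNReal.ofReal_ne_top hvlint
      _ = r / (1 - r) := ENNReal.toReal_ofReal (by positivity)
  -- interchange of sum and convolution
  have huf : (∫⁻ s, (‖u s‖₊ : ℝ≥0∞)) ≠ ∞ := hi.2.ne
  have hprodmeas : ∀ n, Measurable fun p : ℝ × ℝ =>
      (‖u p.2‖₊ : ℝ≥0∞) * (‖Q n (p.1 - p.2)‖₊ : ℝ≥0∞) := by
    intro n
    exact ((hm.comp measurable_snd).nnnorm.coe_nnreal_ennreal).mul
      (((hQsm n).measurable.comp (measurable_fst.sub measurable_snd)).nnnorm.coe_nnreal_ennreal)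
  have hKmeas : Measurable fun x => ∑' n, ∫⁻ s, (‖u s‖₊ : ℝ≥0∞) * (‖Q n (x - s)‖₊ : ℝ≥0∞) := by
    refine Measurable.ennreal_tsum fun n => ?_
    exact Measurable.lintegral_prod_right' (hprodmeas n)
  have hKfin : ∀ᵐ x, (∑' n, ∫⁻ s, (‖u s‖₊ : ℝ≥0∞) * (‖Q n (x - s)‖₊ : ℝ≥0∞)) ≠ ∞ := by
    have hint : (∫⁻ x, ∑' n, ∫⁻ s, (‖u s‖₊ : ℝ≥0∞) * (‖Q n (x - s)‖₊ : ℝ≥0∞)) ≠ ∞ := by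
      rw [lintegral_tsum fun n => (Measurable.lintegral_prod_right' (hprodmeas n)).aemeasurable]
      have hswap : ∀ n, (∫⁻ x, ∫⁻ s, (‖u s‖₊ : ℝ≥0∞) * (‖Q n (x - s)‖₊ : ℝ≥0∞))
          = (∫⁻ s, (‖u s‖₊ : ℝ≥0∞)) * I n := by
        intro n
        rw [lintegral_lintegral_swap (hprodmeas n).aemeasurable]
        have : ∀ s : ℝ, (∫⁻ x, (‖u s‖₊ : ℝ≥0∞) * (‖Q n (x - s)‖₊ : ℝ≥0∞))
            = (‖u s‖₊ : ℝ≥0∞) * I n := by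
          intro s
          rw [lintegral_const_mul' _ _ ENNReal.coe_ne_top]
          congr 1
          exact lintegral_sub_right_eq_self (fun x => (‖Q n x‖₊ : ℝ≥0∞)) s
        simp_rw [this]
        rw [lintegral_mul_const _ hm.nnnorm.coe_nnreal_ennreal]
      simp_rw [hswap]
      rw [ENNReal.tsum_mul_left]
      exact ENNReal.mul_ne_top huf hIfin
    exact (ae_lt_top hKmeas hint).mono fun x hx => hx.ne
  -- convolution with v equals sum of convolutions with Q n, a.e.
  have hconv_ae : ∀ᵐ x, (u ⋆[mulCC] v) x = ∑' n, (-1 : ℂ) ^ n * P (n + 1) x := by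
    filter_upwards [hKfin] with x hx
    have hQconv : ∀ n, (u ⋆[mulCC] Q n) = P (n + 1) := by
      intro n
      rw [hPs n]
      exact convolution_congr mulCC EventuallyEq.rfl (hQe n)
    have step1 : (u ⋆[mulCC] v) x = ∫ s, ∑' n, u s * ((-1 : ℂ) ^ n * Q n (x - s)) := by
      rw [convolution_def]
      congr 1; funext s
      rw [tsum_mul_left]
      rfl
    have step2 : (∫ s, ∑' n, u s * ((-1 : ℂ) ^ n * Q n (x - s)))
        = ∑' n, ∫ s, u s * ((-1 : ℂ) ^ n * Q n (x - s)) := by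
      refine integral_tsum (fun n => ?_) ?_
      · exact (hm.mul (((hQsm n).measurable.comp
          (measurable_const.sub measurable_id)).const_mul _)).aestronglyMeasurable
      · refine ne_top_of_le_ne_top hx (le_of_eq ?_)
        congr 1; funext n
        congr 1; funext s
        simp [nnnorm_mul, ENNReal.coe_mul]; rfl
    have step3 : ∀ n, (∫ s, u s * ((-1 : ℂ) ^ n * Q n (x - s)))
        = (-1 : ℂ) ^ n * (u ⋆[mulCC] Q n) x := by
      intro n
      rw [convolution_def]
      rw [← integral_const_mul]
      congr 1; funext s
      show u s * ((-1 : ℂ) ^ n * Q n (x - s)) = (-1 : ℂ) ^ n * (mulCC (u s) (Q n (x - s)))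
      rw [mulCC_apply]; ring
    rw [step1, step2]
    congr 1; funext n
    rw [step3, hQconv]
  -- telescoping identity
  have heq : ∀ᵐ t, v t + (u ⋆[mulCC] v) t = u t := by
    filter_upwards [hconv_ae, hsumv, ae_all_iff.2 hQe] with t hconv hsum hQP
    set a : ℕ → ℂ := fun n => (-1 : ℂ) ^ n * P n t with ha
    have haeq : (fun n => (-1 : ℂ) ^ n * Q n t) = a := by
      funext n; rw [ha]; simp only []; rw [hQP n]
    have hsa : Summable a := haeq ▸ hsum
    have hvt : v t = ∑' n, a n := by rw [hv]; exact tsum_congr fun n => by rw [← haeq]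
    have hconv' : (u ⋆[mulCC] v) t = -∑' n, a (n + 1) := by
      rw [hconv, ← tsum_neg]
      refine tsum_congr fun n => ?_
      rw [ha]; simp only []
      rw [pow_succ]; ring
    rw [hvt, hconv', hsa.tsum_eq_zero_add]
    have : a 0 = u t := by rw [ha]; simp [hP0]
    rw [← this]; ring
  -- final packaging with indicator of measurable representative
  have hmkeq : hvaesm.mk v =ᵐ[volume] v := hvaesm.ae_eq_mk.symm
  have hvind : v =ᵐ[volume] (Ioi (0 : ℝ)).indicator v := by
    filter_upwards [ae_all_iff.2 hQe] with t hQP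
    rcases lt_or_ge 0 t with ht | ht
    · exact (indicator_of_mem ht v).symm
    · have hv0 : v t = 0 := by
        show (∑' n, (-1 : ℂ) ^ n * Q n t) = 0
        have : (fun n => (-1 : ℂ) ^ n * Q n t) = fun _ => (0 : ℂ) := by
          funext n; rw [hQP n, hPsupp n t ht, mul_zero]
        rw [this, tsum_zero]
      rw [hv0, indicator_of_notMem (by simpa using ht)]
  have hVv : (Ioi (0 : ℝ)).indicator (hvaesm.mk v) =ᵐ[volume] v := by
    refine EventuallyEq.trans ?_ hvind.symm
    filter_upwards [hmkeq] with t ht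
    by_cases h : t ∈ Ioi (0 : ℝ)
    · rw [indicator_of_mem h, indicator_of_mem h, ht]
    · rw [indicator_of_notMem h, indicator_of_notMem h]
  refine ⟨(Ioi (0 : ℝ)).indicator (hvaesm.mk v), ?_, ?_, ?_, ?_, ?_⟩
  · exact (hvaesm.stronglyMeasurable_mk.measurable).indicator measurableSet_Ioi
  · intro t ht
    exact indicator_of_notMem (by simpa using ht) _
  · exact hvint.congr hVv.symm
  · have hcc : (u ⋆[mulCC] (Ioi (0 : ℝ)).indicator (hvaesm.mk v)) = (u ⋆[mulCC] v) :=
      convolution_congr mulCC EventuallyEq.rfl hVv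
    filter_upwards [heq, hVv] with t h1 h2
    rw [hcc, h2]; exact h1
  · rw [integral_congr_ae ((hVv).mono fun x hx => congrArg norm hx)]
    exact hvnorm


/-- The causal convolution `(f ∗ g)(t) = ∫₀^t f(t-τ) g(τ) dτ`. -/
noncomputable def causalConv (f g : ℝ → ℂ) (t : ℝ) : ℂ :=
  ∫ τ in (0:ℝ)..t, f (t - τ) * g τ

/-- If `‖f_o‖_{1,α} < 1` then there exists a closed-loop impulse response
`f_cl ∈ L_{1,α}` with `f_cl + f_o ∗ f_cl = f_o` a.e. on `[0,∞)` and
`‖f_cl‖_{1,α} ≤ ‖f_o‖_{1,α} / (1 - ‖f_o‖_{1,α})`. -/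
theorem closed_loop_impulse_response_exists
    (α : ℝ) (hα : 0 ≤ α) (fo : ℝ → ℂ) (hfo : Measurable fo)
    (hfoint : IntegrableOn (fun t : ℝ => ‖fo t‖ * Real.exp (-α * t)) (Set.Ioi 0))
    (hnorm : (∫ t in Set.Ioi (0:ℝ), ‖fo t‖ * Real.exp (-α * t)) < 1) :
    ∃ fcl : ℝ → ℂ, Measurable fcl ∧
      IntegrableOn (fun t : ℝ => ‖fcl t‖ * Real.exp (-α * t)) (Set.Ioi 0) ∧
      (∀ᵐ t : ℝ, 0 ≤ t → fcl t + causalConv fo fcl t = fo t) ∧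
      (∫ t in Set.Ioi (0:ℝ), ‖fcl t‖ * Real.exp (-α * t))
        ≤ (∫ t in Set.Ioi (0:ℝ), ‖fo t‖ * Real.exp (-α * t))
          / (1 - ∫ t in Set.Ioi (0:ℝ), ‖fo t‖ * Real.exp (-α * t)) := by
  classical
  set u : ℝ → ℂ := (Ioi (0:ℝ)).indicator (fun t => fo t * (Real.exp (-α * t) : ℂ)) with hu
  have hexpmeas : Measurable fun t : ℝ => ((Real.exp (-α * t) : ℝ) : ℂ) :=
    Complex.measurable_ofReal.comp ((measurable_id.const_mul (-α)).exp)
  have hum : Measurable u := (hfo.mul hexpmeas).indicator measurableSet_Ioi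
  have hnorm_eq : ∀ x, ‖u x‖ =
      (Ioi (0:ℝ)).indicator (fun t => ‖fo t‖ * Real.exp (-α * t)) x := by
    intro x
    rw [hu]
    by_cases h : x ∈ Ioi (0:ℝ)
    · rw [indicator_of_mem h, indicator_of_mem h]
      rw [norm_mul, Complex.norm_real, Real.norm_eq_abs, abs_of_pos (Real.exp_pos _)]
    · rw [indicator_of_notMem h, indicator_of_notMem h, norm_zero]
  have hui : Integrable u := by
    rw [hu, integrable_indicator_iff measurableSet_Ioi]
    refine Integrable.mono' hfoint ((hfo.mul hexpmeas).aestronglyMeasurable.restrict) ?_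
    refine Eventually.of_forall fun t => ?_
    rw [norm_mul, Complex.norm_real, Real.norm_eq_abs, abs_of_pos (Real.exp_pos _)]
  have hre : (∫ x, ‖u x‖) = ∫ t in Set.Ioi (0:ℝ), ‖fo t‖ * Real.exp (-α * t) := by
    rw [show (fun x => ‖u x‖) = (Ioi (0:ℝ)).indicator (fun t => ‖fo t‖ * Real.exp (-α * t))
      from funext hnorm_eq]
    exact integral_indicator measurableSet_Ioi
  have husupp : ∀ t ≤ 0, u t = 0 := fun t ht =>
    indicator_of_notMem (by simpa using ht) _
  have hr1 : (∫ x, ‖u x‖) < 1 := by rw [hre]; exact hnorm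
  obtain ⟨v, hvm, hvsupp, hvint, hveq, hvnorm⟩ := neumann hum hui husupp hr1
  set fcl : ℝ → ℂ := fun t => v t * (Real.exp (α * t) : ℂ) with hfcl
  have hfclm : Measurable fcl :=
    hvm.mul (Complex.measurable_ofReal.comp ((measurable_id.const_mul α).exp))
  have hnormfcl : ∀ t, ‖fcl t‖ * Real.exp (-α * t) = ‖v t‖ := by
    intro t
    rw [hfcl]
    simp only [norm_mul, Complex.norm_real, Real.norm_eq_abs, abs_of_pos (Real.exp_pos _)]
    rw [mul_assoc, ← Real.exp_add]
    norm_num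
  refine ⟨fcl, hfclm, ?_, ?_, ?_⟩
  · have : (fun t : ℝ => ‖fcl t‖ * Real.exp (-α * t)) = fun t => ‖v t‖ := funext hnormfcl
    rw [this]
    exact hvint.norm.integrableOn
  · have hne : ∀ᵐ t : ℝ, t ≠ 0 := by
      rw [ae_iff]
      simpa using measure_singleton (0:ℝ)
    filter_upwards [hveq, hne] with t ht htne ht0
    have htpos : 0 < t := lt_of_le_of_ne ht0 (Ne.symm htne)
    -- rewrite (u ⋆ v) t as an integral over (0, t]
    have e1 : (u ⋆[mulCC] v) t = ∫ τ, u (t - τ) * v τ := by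
      rw [convolution_def]
      rw [show (∫ s, mulCC (u s) (v (t - s))) = ∫ s, u s * v (t - s) from rfl]
      rw [← integral_sub_left_eq_self (fun s => u s * v (t - s)) volume t]
      congr 1; funext τ
      rw [sub_sub_cancel]
    have e2 : (∫ τ, u (t - τ) * v τ) = ∫ τ in Ioc 0 t, u (t - τ) * v τ := by
      refine (setIntegral_eq_integral_of_forall_compl_eq_zero fun τ hτ => ?_).symm
      rcases le_or_gt τ 0 with h | h
      · rw [hvsupp τ h, mul_zero]
      · have : t ≤ τ := by
          by_contra hc
          exact hτ ⟨h, (lt_of_not_ge hc).le⟩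
        rw [husupp (t - τ) (by linarith), zero_mul]
    have e3 : causalConv fo fcl t = (Real.exp (α * t) : ℂ) * ∫ τ in Ioc 0 t, u (t - τ) * v τ := by
      rw [causalConv, intervalIntegral.integral_of_le htpos.le]
      rw [← integral_const_mul]
      refine setIntegral_congr_ae measurableSet_Ioc ?_
      have htne' : ∀ᵐ τ : ℝ, τ ≠ t := by
        rw [ae_iff]; simpa using measure_singleton t
      filter_upwards [htne'] with τ hτt hτ
      have h0τ : 0 < τ := hτ.1
      have hτlt : τ < t := lt_of_le_of_ne hτ.2 hτt
      have hmem : t - τ ∈ Ioi (0:ℝ) := by simp; linarith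
      rw [hu, indicator_of_mem hmem]
      have key : (Real.exp (α * t) : ℂ) * (Real.exp (-α * (t - τ)) : ℂ)
          = (Real.exp (α * τ) : ℂ) := by
        rw [← Complex.ofReal_mul, ← Real.exp_add]
        norm_num
        ring_nf
      rw [hfcl]
      calc fo (t - τ) * (v τ * (Real.exp (α * τ) : ℂ))
          = fo (t - τ) * (v τ * ((Real.exp (α * t) : ℂ) * (Real.exp (-α * (t - τ)) : ℂ))) := by
            rw [key]
        _ = (Real.exp (α * t) : ℂ) * (fo (t - τ) * (Real.exp (-α * (t - τ)) : ℂ) * v τ) := by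
            ring
    have hut : u t = fo t * (Real.exp (-α * t) : ℂ) := indicator_of_mem htpos _
    have hE : (Real.exp (α * t) : ℂ) * (Real.exp (-α * t) : ℂ) = 1 := by
      rw [← Complex.ofReal_mul, ← Real.exp_add]
      norm_num
    calc fcl t + causalConv fo fcl t
        = (Real.exp (α * t) : ℂ) * (v t + (u ⋆[mulCC] v) t) := by
          rw [e3, ← e2, ← e1, hfcl]; ring
      _ = (Real.exp (α * t) : ℂ) * u t := by rw [ht]
      _ = fo t := by rw [hut, ← mul_assoc, mul_comm ((Real.exp (α * t) : ℂ)) (fo t),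
            mul_assoc, hE, mul_one]
  · have hint_eq : (∫ t in Set.Ioi (0:ℝ), ‖fcl t‖ * Real.exp (-α * t))
        = ∫ x, ‖v x‖ := by
      rw [show (fun t : ℝ => ‖fcl t‖ * Real.exp (-α * t)) = fun t => ‖v t‖ from funext hnormfcl]
      refine setIntegral_eq_integral_of_forall_compl_eq_zero fun x hx => ?_
      rw [hvsupp x (by simpa using hx), norm_zero]
    rw [hint_eq, ← hre]
    exact hvnorm
end

section
/- Let α ≥ 0, let f_o : [0,∞) → ℂ be measurable with ‖f_o‖_{1,α} = ∫₀^∞ |f_o(t)| e^{−α t} dt < 1, and let f_cl ∈ L_{1,α} satisfy f_cl + f_o ∗ f_cl = f_o almost everywhere on [0,∞). Then for every complex s with Re s ≥ α one has |F_o(s)| < 1 (so 1 + F_o(s) ≠ 0) and the Laplace transforms satisfy F_cl(s) = F_o(s) / (1 + F_o(s)), where F_o(s) = ∫₀^∞ f_o(t) e^{−s t} dt and F_cl(s) = ∫₀^∞ f_cl(t) e^{−s t} dt. -/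
open MeasureTheory Real Set
open scoped Convolution

/-- The Laplace transform `F(s) = ∫₀^∞ f(t) e^{-s t} dt`. -/
noncomputable def laplace (f : ℝ → ℂ) (s : ℂ) : ℂ :=
  ∫ t in Set.Ioi (0:ℝ), f t * Complex.exp (-s * t)

lemma exp_norm_eq (s : ℂ) (t : ℝ) : ‖Complex.exp (-s * t)‖ = Real.exp (-s.re * t) := by
  rw [Complex.norm_exp]
  congr 1
  simp [Complex.mul_re]

lemma integrand_integrable (α : ℝ) (f : ℝ → ℂ) (hf : Measurable f)
    (hint : IntegrableOn (fun t : ℝ => ‖f t‖ * Real.exp (-α * t)) (Set.Ioi 0))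
    (s : ℂ) (hs : α ≤ s.re) :
    IntegrableOn (fun t : ℝ => f t * Complex.exp (-s * t)) (Set.Ioi 0) := by
  refine Integrable.mono' hint ?_ ?_
  · exact (hf.aestronglyMeasurable.mul
      ((Complex.continuous_exp.comp (by fun_prop)).aestronglyMeasurable)).restrict
  · filter_upwards [ae_restrict_mem measurableSet_Ioi] with t ht
    rw [norm_mul, exp_norm_eq]
    have : Real.exp (-s.re * t) ≤ Real.exp (-α * t) := by
      apply Real.exp_le_exp.mpr
      have : (0:ℝ) < t := ht
      nlinarith
    exact mul_le_mul_of_nonneg_left this (norm_nonneg _)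

lemma laplace_norm_le (α : ℝ) (f : ℝ → ℂ)
    (hint : IntegrableOn (fun t : ℝ => ‖f t‖ * Real.exp (-α * t)) (Set.Ioi 0))
    (s : ℂ) (hs : α ≤ s.re) :
    ‖laplace f s‖ ≤ ∫ t in Set.Ioi (0:ℝ), ‖f t‖ * Real.exp (-α * t) := by
  refine (norm_integral_le_integral_norm _).trans ?_
  refine integral_mono_of_nonneg (Filter.Eventually.of_forall fun t => norm_nonneg _) hint ?_
  filter_upwards [ae_restrict_mem measurableSet_Ioi] with t ht
  rw [norm_mul, exp_norm_eq]
  have h2 : Real.exp (-s.re * t) ≤ Real.exp (-α * t) := by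
    apply Real.exp_le_exp.mpr
    have : (0:ℝ) < t := ht
    nlinarith
  exact mul_le_mul_of_nonneg_left h2 (norm_nonneg _)

/-- If `‖f_o‖_{1,α} < 1` and `f_cl ∈ L_{1,α}` satisfies
`f_cl + f_o ∗ f_cl = f_o` a.e. on `[0,∞)`, then for every `s` with `Re s ≥ α` we have
`|F_o(s)| < 1` (so `1 + F_o(s) ≠ 0`) and `F_cl(s) = F_o(s) / (1 + F_o(s))`. -/
theorem closed_loop_transfer_function
    (α : ℝ) (hα : 0 ≤ α) (fo fcl : ℝ → ℂ) (hfo : Measurable fo) (hfcl : Measurable fcl)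
    (hfoint : IntegrableOn (fun t : ℝ => ‖fo t‖ * Real.exp (-α * t)) (Set.Ioi 0))
    (hnorm : (∫ t in Set.Ioi (0:ℝ), ‖fo t‖ * Real.exp (-α * t)) < 1)
    (hfclint : IntegrableOn (fun t : ℝ => ‖fcl t‖ * Real.exp (-α * t)) (Set.Ioi 0))
    (heq : ∀ᵐ t : ℝ, 0 ≤ t → fcl t + causalConv fo fcl t = fo t) :
    ∀ s : ℂ, α ≤ s.re →
      ‖laplace fo s‖ < 1 ∧ 1 + laplace fo s ≠ 0 ∧
      laplace fcl s = laplace fo s / (1 + laplace fo s) := by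
  intro s hs
  -- bound on ‖laplace fo s‖
  have hlt : ‖laplace fo s‖ < 1 :=
    lt_of_le_of_lt (laplace_norm_le α fo hfoint s hs) hnorm
  have hne : 1 + laplace fo s ≠ 0 := by
    intro h
    have : laplace fo s = -1 := by linear_combination h
    rw [this] at hlt
    simp at hlt
  refine ⟨hlt, hne, ?_⟩
  -- set up indicator functions and convolution
  set F : ℝ → ℂ := Set.indicator (Set.Ioi 0) (fun t => fo t * Complex.exp (-s * t)) with hFdef
  set G : ℝ → ℂ := Set.indicator (Set.Ioi 0) (fun t => fcl t * Complex.exp (-s * t)) with hGdef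
  have hFint : Integrable F := by
    rw [hFdef, integrable_indicator_iff measurableSet_Ioi]
    exact integrand_integrable α fo hfo hfoint s hs
  have hGint : Integrable G := by
    rw [hGdef, integrable_indicator_iff measurableSet_Ioi]
    exact integrand_integrable α fcl hfcl hfclint s hs
  set L : ℂ →L[ℝ] ℂ →L[ℝ] ℂ := ContinuousLinearMap.mul ℝ ℂ with hLdef
  -- convolution value for t > 0
  have hconv : ∀ t : ℝ, 0 < t →
      (F ⋆[L, volume] G) t = Complex.exp (-s * t) * causalConv fo fcl t := by
    intro t ht
    have h1 : (F ⋆[L, volume] G) t = ∫ τ : ℝ, F τ * G (t - τ) := rfl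
    have h2 : (∫ τ : ℝ, F τ * G (t - τ)) = ∫ τ : ℝ, F (t - τ) * G (t - (t - τ)) := by
      exact (integral_sub_left_eq_self (fun τ => F τ * G (t - τ)) volume t).symm
    have h3 : (fun τ : ℝ => F (t - τ) * G (t - (t - τ)))
        = Set.indicator (Set.Ioo 0 t)
            (fun τ => Complex.exp (-s * t) * (fo (t - τ) * fcl τ)) := by
      funext τ
      by_cases hτ : τ ∈ Set.Ioo 0 t
      · obtain ⟨hτ0, hτt⟩ := hτ
        rw [Set.indicator_of_mem (Set.mem_Ioo.mpr ⟨hτ0, hτt⟩)]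
        have hmem1 : t - τ ∈ Set.Ioi (0:ℝ) := by simp; linarith
        have hmem2 : t - (t - τ) ∈ Set.Ioi (0:ℝ) := by simp [hτ0]
        rw [hFdef, hGdef, Set.indicator_of_mem hmem1, Set.indicator_of_mem hmem2]
        have h5 : t - (t - τ) = τ := by ring
        rw [h5]
        have hexp : Complex.exp (-s * (↑(t - τ) : ℂ)) * Complex.exp (-s * (τ : ℂ))
            = Complex.exp (-s * t) := by
          rw [← Complex.exp_add]
          congr 1
          push_cast
          ring
        linear_combination (fo (t - τ) * fcl τ) * hexp
      · rw [Set.indicator_of_notMem hτ]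
        rw [Set.mem_Ioo, not_and_or] at hτ
        rcases hτ with hτ | hτ
        · push_neg at hτ
          have : t - (t - τ) ∉ Set.Ioi (0:ℝ) := by simp; linarith
          rw [hGdef, Set.indicator_of_notMem this, mul_zero]
        · push_neg at hτ
          have : t - τ ∉ Set.Ioi (0:ℝ) := by simp; linarith
          rw [hFdef, Set.indicator_of_notMem this, zero_mul]
    have h4 : (∫ τ : ℝ, F (t - τ) * G (t - (t - τ)))
        = ∫ τ in Set.Ioo 0 t, Complex.exp (-s * t) * (fo (t - τ) * fcl τ) := by
      rw [h3, integral_indicator measurableSet_Ioo]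
    rw [h1, h2, h4, integral_const_mul]
    congr 1
    rw [causalConv, intervalIntegral.integral_of_le ht.le,
      ← integral_Ioc_eq_integral_Ioo]
  -- convolution vanishes for t ≤ 0
  have hzero : ∀ t : ℝ, t ≤ 0 → (F ⋆[L, volume] G) t = 0 := by
    intro t ht
    have : (fun τ : ℝ => L (F τ) (G (t - τ))) = fun _ => 0 := by
      funext τ
      by_cases hτ : τ ∈ Set.Ioi (0:ℝ)
      · have : t - τ ∉ Set.Ioi (0:ℝ) := by
          simp only [Set.mem_Ioi] at hτ ⊢; push_neg; linarith
        simp [hGdef, Set.indicator_of_notMem this]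
      · simp [hFdef, Set.indicator_of_notMem hτ]
    rw [convolution, this, integral_zero]
  -- total integral of the convolution
  have hconvint : Integrable (F ⋆[L, volume] G) := hFint.integrable_convolution L hGint
  have hFG : ∫ t, (F ⋆[L, volume] G) t = laplace fo s * laplace fcl s := by
    rw [integral_convolution L hFint hGint]
    have hF : ∫ t, F t = laplace fo s := by
      rw [hFdef, integral_indicator measurableSet_Ioi]; rfl
    have hG : ∫ t, G t = laplace fcl s := by
      rw [hGdef, integral_indicator measurableSet_Ioi]; rfl
    rw [hF, hG]; rfl
  have hFGset : ∫ t in Set.Ioi (0:ℝ), (F ⋆[L, volume] G) t = laplace fo s * laplace fcl s := by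
    rw [← hFG]
    apply setIntegral_eq_integral_of_forall_compl_eq_zero
    intro t ht
    exact hzero t (by simpa using ht)
  -- the main identity on Laplace transforms
  have hconvIntOn : IntegrableOn (fun t => causalConv fo fcl t * Complex.exp (-s * t))
      (Set.Ioi 0) := by
    exact hconvint.integrableOn.congr_fun
      (fun t ht => by rw [hconv t ht]; ring) measurableSet_Ioi
  have hfclIntOn : IntegrableOn (fun t => fcl t * Complex.exp (-s * t)) (Set.Ioi 0) :=
    integrand_integrable α fcl hfcl hfclint s hs
  have hae : ∀ᵐ t ∂(volume.restrict (Set.Ioi (0:ℝ))),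
      fcl t * Complex.exp (-s * t) + causalConv fo fcl t * Complex.exp (-s * t)
        = fo t * Complex.exp (-s * t) := by
    rw [ae_restrict_iff' measurableSet_Ioi]
    filter_upwards [heq] with t ht htpos
    have := ht (le_of_lt htpos)
    rw [← this]; ring
  have hsplit : laplace fo s = laplace fcl s +
      ∫ t in Set.Ioi (0:ℝ), causalConv fo fcl t * Complex.exp (-s * t) := by
    have : laplace fo s = ∫ t in Set.Ioi (0:ℝ),
        (fcl t * Complex.exp (-s * t) + causalConv fo fcl t * Complex.exp (-s * t)) := by
      rw [laplace]
      exact (integral_congr_ae hae).symm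
    rw [this, integral_add hfclIntOn hconvIntOn]
    rfl
  have hconveq : (∫ t in Set.Ioi (0:ℝ), causalConv fo fcl t * Complex.exp (-s * t))
      = laplace fo s * laplace fcl s := by
    rw [← hFGset]
    apply setIntegral_congr_fun measurableSet_Ioi
    intro t ht
    rw [hconv t ht]; ring
  rw [hconveq] at hsplit
  -- algebra
  field_simp
  linear_combination -hsplit
end

section
/- Let a, L ∈ ℂ and let G : ℂ → ℂ be continuous on a punctured neighborhood of a, and suppose (s − a)·G(s) → L as s → a with s ≠ a. Then the integral of G along the right semicircle of radius ρ centered at a converges, as ρ → 0⁺, to iπL: lim_{ρ→0⁺} ∫_{−π/2}^{π/2} G(a + ρe^{iφ}) · (i ρ e^{iφ}) dφ = iπL. -/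
open Filter Complex Real

/-- If `G` is continuous on a punctured neighborhood of `a` and
`(s - a)·G(s) → L` as `s → a`, `s ≠ a`, then the integral of `G` over the right
semicircle of radius `ρ` centered at `a` tends to `iπL` as `ρ → 0⁺`. -/
theorem semicircle_integral_limit
    (a L : ℂ) (G : ℂ → ℂ) (U : Set ℂ) (hU : U ∈ nhds a)
    (hGcont : ContinuousOn G (U \ {a}))
    (hG : Filter.Tendsto (fun s : ℂ => (s - a) * G s) (nhdsWithin a {a}ᶜ) (nhds L)) :
    Filter.Tendsto
      (fun ρ : ℝ => ∫ φ in (-(π/2) : ℝ)..(π/2),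
        G (a + (ρ : ℂ) * Complex.exp (φ * Complex.I))
          * (Complex.I * (ρ : ℂ) * Complex.exp (φ * Complex.I)))
      (nhdsWithin 0 (Set.Ioi 0)) (nhds (Complex.I * (π : ℂ) * L)) := by
  rw [Metric.tendsto_nhdsWithin_nhds]
  intro ε hε
  obtain ⟨r, hr, hball⟩ := Metric.mem_nhds_iff.mp hU
  rw [Metric.tendsto_nhdsWithin_nhds] at hG
  obtain ⟨δ, hδ, hF⟩ := hG (ε/4) (by linarith)
  refine ⟨min δ r, lt_min hδ hr, ?_⟩
  intro ρ hρ hdist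
  rw [Set.mem_Ioi] at hρ
  rw [Real.dist_eq, sub_zero, abs_of_pos hρ] at hdist
  set s : ℝ → ℂ := fun φ => a + (ρ : ℂ) * Complex.exp (φ * Complex.I) with hs
  have habs : ∀ φ : ℝ, ‖(ρ : ℂ) * Complex.exp (φ * Complex.I)‖ = ρ := by
    intro φ
    rw [norm_mul, Complex.norm_exp_ofReal_mul_I, Complex.norm_real, Real.norm_eq_abs, abs_of_pos hρ, mul_one]
  have hne : ∀ φ : ℝ, s φ ≠ a := by
    intro φ h
    have : ‖(ρ : ℂ) * Complex.exp (φ * Complex.I)‖ = 0 := by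
      have : (ρ : ℂ) * Complex.exp (φ * Complex.I) = 0 := by
        have := h; simp only [hs] at this
        linear_combination this
      simp [this]
    rw [habs φ] at this
    exact absurd this (ne_of_gt hρ)
  have hdista : ∀ φ : ℝ, dist (s φ) a = ρ := by
    intro φ
    rw [Complex.dist_eq]
    have h : s φ - a = (ρ : ℂ) * Complex.exp (φ * Complex.I) := by
      simp only [hs]; ring
    rw [h, habs φ]
  have hmem : ∀ φ : ℝ, s φ ∈ U \ {a} := by
    intro φ
    refine ⟨hball ?_, hne φ⟩
    rw [Metric.mem_ball, hdista φ]
    exact lt_of_lt_of_le hdist (min_le_right _ _)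
  have hcont_s : Continuous s := by fun_prop
  have hGc : Continuous fun φ : ℝ => G (s φ) :=
    hGcont.comp_continuous hcont_s hmem
  have hcont_f : Continuous fun φ : ℝ =>
      G (s φ) * (Complex.I * (ρ : ℂ) * Complex.exp (φ * Complex.I)) := by
    apply hGc.mul
    fun_prop
  have hint : IntervalIntegrable
      (fun φ : ℝ => G (s φ) * (Complex.I * (ρ : ℂ) * Complex.exp (φ * Complex.I)))
      MeasureTheory.volume (-(π/2)) (π/2) := hcont_f.intervalIntegrable _ _
  have hconst : (∫ φ in (-(π/2) : ℝ)..(π/2), (Complex.I * L)) =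
      Complex.I * (π : ℂ) * L := by
    rw [intervalIntegral.integral_const]
    have : (π/2 : ℝ) - (-(π/2)) = π := by ring
    rw [this, Complex.real_smul]
    push_cast
    ring
  rw [Complex.dist_eq]
  have hsub : (∫ φ in (-(π/2) : ℝ)..(π/2),
        G (s φ) * (Complex.I * (ρ : ℂ) * Complex.exp (φ * Complex.I)))
      - Complex.I * (π : ℂ) * L
      = ∫ φ in (-(π/2) : ℝ)..(π/2),
        (G (s φ) * (Complex.I * (ρ : ℂ) * Complex.exp (φ * Complex.I))
          - Complex.I * L) := by
    rw [intervalIntegral.integral_sub hint (intervalIntegrable_const), hconst]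
  have hbound : ∀ φ ∈ Set.uIoc (-(π/2) : ℝ) (π/2),
      ‖G (s φ) * (Complex.I * (ρ : ℂ) * Complex.exp (φ * Complex.I))
        - Complex.I * L‖ ≤ ε/4 := by
    intro φ _
    have h1 : dist ((s φ - a) * G (s φ)) L < ε/4 := by
      apply hF (hne φ)
      rw [hdista φ]
      exact lt_of_lt_of_le hdist (min_le_left _ _)
    have h2 : G (s φ) * (Complex.I * (ρ : ℂ) * Complex.exp (φ * Complex.I))
        - Complex.I * L = Complex.I * ((s φ - a) * G (s φ) - L) := by
      simp only [hs]
      ring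
    rw [h2]
    rw [norm_mul, Complex.norm_I, one_mul]
    rw [Complex.dist_eq] at h1
    exact le_of_lt h1
  calc ‖(∫ φ in (-(π/2) : ℝ)..(π/2),
        G (s φ) * (Complex.I * (ρ : ℂ) * Complex.exp (φ * Complex.I)))
      - Complex.I * (π : ℂ) * L‖
      = ‖∫ φ in (-(π/2) : ℝ)..(π/2),
        (G (s φ) * (Complex.I * (ρ : ℂ) * Complex.exp (φ * Complex.I))
          - Complex.I * L)‖ := by rw [hsub]
    _ ≤ (ε/4) * |(π/2 : ℝ) - (-(π/2))| :=
        intervalIntegral.norm_integral_le_of_norm_le_const hbound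
    _ < ε := by
        have hπ : |(π/2 : ℝ) - (-(π/2))| = π := by
          rw [abs_of_pos (by ring_nf; positivity)]; ring
        rw [hπ]
        nlinarith [Real.pi_lt_d2, Real.pi_pos]
end
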